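/- A set W of vertices of a graph G (with 2 ≤ |W| ≤ |V|−2) is isolable if and only if for every distinct a, b ∈ W and distinct c, d ∈ V∖W, the number N(a,b;c,d) of edges of G among the pairs {a,c}, {a,d}, {b,c}, {b,d} is even. -/

import Mathlib

/-- The `U`-switching of a graph: toggle exactly the edges between `U` and its complement. -/
def SimpleGraph.switch {V : Type*} (G : SimpleGraph V) (U : Set V) : SimpleGraph V where
  Adj a b := a ≠ b ∧ (G.Adj a b ↔ ((a ∈ U) ↔ (b ∈ U)))
  symm := ⟨fun a b => by
    rintro ⟨h, h2⟩
    refine ⟨h.symm, ?_⟩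
    rw [G.adj_comm]; tauto⟩
  loopless := ⟨fun a => by simp⟩

/-- The complete bipartite graph with parts `U` and `Uᶜ` on vertex set `V`. -/
def completeBipartite {V : Type*} (U : Set V) : SimpleGraph V where
  Adj a b := (a ∈ U ∧ b ∉ U) ∨ (b ∈ U ∧ a ∉ U)
  symm := ⟨fun a b => by beta_reduce; tauto⟩
  loopless := ⟨fun a => by beta_reduce; tauto⟩

/-- `W` is isolable in `G` if `2 ≤ |W|`, `2 ≤ |Wᶜ|`, and some switching of `G`
has no edges between `W` and `Wᶜ`. -/
def SimpleGraph.Isolable {V : Type*} (G : SimpleGraph V) (W : Set V) : Prop :=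
  2 ≤ W.ncard ∧ 2 ≤ Wᶜ.ncard ∧
    ∃ U : Set V, ∀ a ∈ W, ∀ b ∈ Wᶜ, ¬ (G.switch U).Adj a b

def SimpleGraph.SwitchingSeparable {V : Type*} (G : SimpleGraph V) : Prop :=
  ∃ W : Set V, G.Isolable W

/-- The number of edges of `G` among the pairs {a,c}, {a,d}, {b,c}, {b,d}. -/
noncomputable def SimpleGraph.N {V : Type*} (G : SimpleGraph V) (a b c d : V) : ℕ := by
  classical
  exact (if G.Adj a c then 1 else 0) + (if G.Adj a d then 1 else 0) +
    (if G.Adj b c then 1 else 0) + (if G.Adj b d then 1 else 0)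

/-- The circulant graph on `ZMod n` with connection set `{±1, …, ±⌊n/4⌋}`. -/
def circulant (n : ℕ) : SimpleGraph (ZMod n) :=
  SimpleGraph.fromRel (fun a b => ∃ j : ℕ, 1 ≤ j ∧ j ≤ n / 4 ∧ b = a + (j : ZMod n))

/-- Evaluation of a multilinear polynomial over GF(2), given by its coefficient function. -/
def mleval {k : ℕ} (c : Finset (Fin k) → ZMod 2) (x : Fin k → ZMod 2) : ZMod 2 :=
  ∑ s : Finset (Fin k), c s * ∏ i ∈ s, x i

/-- The multilinear polynomial `c` has degree at most `d`. -/
def mldegLE {k : ℕ} (c : Finset (Fin k) → ZMod 2) (d : ℕ) : Prop :=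
  ∀ s : Finset (Fin k), c s ≠ 0 → s.card ≤ d

/-- The graph of a quadratic polynomial: `i ~ j` iff the monomial `x i * x j` occurs. -/
def graphOf {k : ℕ} (c : Finset (Fin k) → ZMod 2) : SimpleGraph (Fin k) where
  Adj i j := i ≠ j ∧ c {i, j} ≠ 0
  symm := ⟨fun i j => by
    rintro ⟨h, h2⟩
    exact ⟨h.symm, by rwa [Finset.pair_comm]⟩⟩
  loopless := ⟨fun i => by simp⟩

/-- The polynomial `c` represents the extended Boolean function `f`
(i.e. they agree on all tuples with an even number of ones). -/
def Represents {k : ℕ} (c : Finset (Fin k) → ZMod 2) (f : (Fin k → ZMod 2) → ZMod 2) : Prop :=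
  ∀ x : Fin k → ZMod 2, (∑ i, x i) = 0 → mleval c x = f x

/-- An extended Boolean function in `k` arguments is separable if on its domain it is the
sum of two Boolean functions depending on disjoint argument sets of at most `k - 2` variables. -/
def EbfSeparable {k : ℕ} (f : (Fin k → ZMod 2) → ZMod 2) : Prop :=
  ∃ A B : Finset (Fin k), Disjoint A B ∧ A.card ≤ k - 2 ∧ B.card ≤ k - 2 ∧
    ∃ g h : (Fin k → ZMod 2) → ZMod 2,
      (∀ x y : Fin k → ZMod 2, (∀ i ∈ A, x i = y i) → g x = g y) ∧
      (∀ x y : Fin k → ZMod 2, (∀ i ∈ B, x i = y i) → h x = h y) ∧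
      ∀ x : Fin k → ZMod 2, (∑ i, x i) = 0 → f x = g x + h x

theorem isolable_iff_even_N {V : Type*} [Fintype V] (G : SimpleGraph V) (W : Set V)
    (h2 : 2 ≤ W.ncard) (h2' : 2 ≤ Wᶜ.ncard) :
    G.Isolable W ↔
      ∀ a ∈ W, ∀ b ∈ W, a ≠ b → ∀ c ∈ Wᶜ, ∀ d ∈ Wᶜ, c ≠ d → Even (G.N a b c d) := by
  classical
  set e : V → V → ZMod 2 := fun v w => if G.Adj v w then 1 else 0 with he
  have hNe : ∀ a b c d : V, Even (G.N a b c d) ↔ e a c + e a d + e b c + e b d = 0 := by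
    intro a b c d
    simp only [SimpleGraph.N, he]
    split_ifs <;> decide
  have lem1 : ∀ x y z w : ZMod 2, (x + z) + (x + w) + (y + z) + (y + w) = 0 := by decide
  have lem2 : ∀ x y : ZMod 2, x + y + x + y = 0 := by decide
  have lem2' : ∀ x y : ZMod 2, x + x + y + y = 0 := by decide
  have lem3 : ∀ x y z w : ZMod 2, x + y + z + w = 0 →
      ¬((x = 1) ↔ ((y = 1) ↔ (z + w = 1))) := by decide
  constructor
  · rintro ⟨-, -, U, hU⟩ a ha b hb hab c hc d hd hcd
    rw [hNe]
    set u : V → ZMod 2 := fun v => if v ∈ U then 1 else 0 with hu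
    have hadj : ∀ v ∈ W, ∀ w ∈ Wᶜ, e v w = u v + u w := by
      intro v hv w hw
      have hvw : v ≠ w := fun h => hw (h ▸ hv)
      have h'' : ¬(G.Adj v w ↔ (v ∈ U ↔ w ∈ U)) := fun hh => hU v hv w hw ⟨hvw, hh⟩
      simp only [he, hu]
      split_ifs <;> first | decide | exact absurd (by tauto) h''
    rw [hadj a ha c hc, hadj a ha d hd, hadj b hb c hc, hadj b hb d hd]
    exact lem1 _ _ _ _
  · intro hEven
    refine ⟨h2, h2', ?_⟩
    obtain ⟨a₀, ha₀⟩ : W.Nonempty := Set.nonempty_of_ncard_ne_zero (by omega)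
    obtain ⟨c₀, hc₀⟩ : Wᶜ.Nonempty := Set.nonempty_of_ncard_ne_zero (by omega)
    refine ⟨{v | (v ∈ W ∧ e v c₀ = 1) ∨ (v ∉ W ∧ e a₀ v + e a₀ c₀ = 1)}, ?_⟩
    intro a ha c hc
    have hac : a ≠ c := fun h => hc (h ▸ ha)
    have key : e a c + e a c₀ + e a₀ c + e a₀ c₀ = 0 := by
      by_cases h1 : a = a₀
      · subst h1; exact lem2 _ _
      · by_cases h3 : c = c₀
        · subst h3; exact lem2' _ _
        · exact (hNe a a₀ c c₀).mp (hEven a ha a₀ ha₀ h1 c hc c₀ hc₀ h3)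
    rintro ⟨-, hiff⟩
    have hAU : a ∈ {v | (v ∈ W ∧ e v c₀ = 1) ∨ (v ∉ W ∧ e a₀ v + e a₀ c₀ = 1)} ↔ e a c₀ = 1 := by
      simp [ha]
    have hCU : c ∈ {v | (v ∈ W ∧ e v c₀ = 1) ∨ (v ∉ W ∧ e a₀ v + e a₀ c₀ = 1)} ↔
        e a₀ c + e a₀ c₀ = 1 := by
      have hcW : c ∉ W := hc
      simp [hcW]
    rw [hAU, hCU] at hiff
    have hadj : G.Adj a c ↔ e a c = 1 := by simp [he]
    rw [hadj] at hiff
    exact lem3 _ _ _ _ key hiff
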